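/- arXiv:1305.2624 — 2 statements merged into one kernel-verified Lean document; each statement's English description precedes it below -/
import Mathlib

section
/- For all real numbers $w, r$ with $0 < w \le r$, the iterated integral $\int_0^{\pi} \int_0^{2\pi} \int_0^{r} \rho \cdot \mathbf{1}[\rho\,|\sin\varphi| \ge w]\; d\rho\, d\varphi\, d\psi$ equals $2\pi r^2 \left(\arccos(w/r) - (w/r)\sqrt{1-(w/r)^2}\right)$, i.e. it equals $\delta(w/r) \cdot \pi^2 r^2$ where $\delta(\nu) = \frac{2}{\pi}\left(\arccos\nu - \nu\sqrt{1-\nu^2}\right)$. -/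
open Real MeasureTheory intervalIntegral

noncomputable def mushroomDelta (ν : ℝ) : ℝ :=
  2 / Real.pi * (Real.arccos ν - ν * Real.sqrt (1 - ν ^ 2))

private lemma ii_congr {f g : ℝ → ℝ} {a b : ℝ} (h : Set.EqOn f g (Set.uIcc a b))
    (hg : IntervalIntegrable g volume a b) : IntervalIntegrable f volume a b := by
  rw [intervalIntegrable_iff] at hg ⊢
  exact hg.congr_fun (fun x hx => (h (Set.uIoc_subset_uIcc hx)).symm) measurableSet_uIoc

private lemma inner_int (w r s : ℝ) (hw : 0 < w) (hr : 0 < r) (hs : 0 ≤ s) :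
    (∫ ρ in (0:ℝ)..r, (if w ≤ ρ * s then ρ else 0)) =
      if w ≤ r * s then (r ^ 2 - (w / s) ^ 2) / 2 else 0 := by
  by_cases h : w ≤ r * s
  · have hs0 : 0 < s := by
      rcases hs.lt_or_eq with h' | h'
      · exact h'
      · exfalso; rw [← h', mul_zero] at h; linarith
    have hc0 : 0 < w / s := div_pos hw hs0
    have hcr : w / s ≤ r := (div_le_iff₀ hs0).2 h
    have hiff : ∀ ρ : ℝ, (w ≤ ρ * s) ↔ w / s ≤ ρ := fun ρ => (div_le_iff₀ hs0).symm
    have hfint : ∀ a b : ℝ,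
        IntervalIntegrable (fun ρ => if w ≤ ρ * s then ρ else 0) volume a b := by
      intro a b
      have he : (fun ρ : ℝ => if w ≤ ρ * s then ρ else 0)
          = (Set.Ici (w / s)).indicator id := by
        funext ρ
        simp [Set.indicator, hiff ρ, Set.mem_Ici]
      rw [he, intervalIntegrable_iff]
      exact (intervalIntegrable_iff.1 intervalIntegral.intervalIntegrable_id).indicator
        measurableSet_Ici
    rw [if_pos h,
      ← intervalIntegral.integral_add_adjacent_intervals (hfint 0 (w / s)) (hfint (w / s) r)]
    have hA : (∫ ρ in (0:ℝ)..(w / s), (if w ≤ ρ * s then ρ else 0)) = 0 := by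
      have hae : ∀ᵐ x : ℝ, x ∈ Set.uIoc (0:ℝ) (w / s) → (if w ≤ x * s then x else 0) = 0 := by
        refine ae_iff.2 (measure_mono_null ?_ (measure_singleton (w / s)))
        intro x hx
        simp only [Set.mem_setOf_eq, Classical.not_imp] at hx
        obtain ⟨hx1, hx2⟩ := hx
        rw [Set.uIoc_of_le hc0.le] at hx1
        by_cases hw' : w ≤ x * s
        · have h1 := (hiff x).1 hw'
          exact Set.mem_singleton_iff.2 (le_antisymm hx1.2 h1)
        · simp [hw'] at hx2
      rw [intervalIntegral.integral_congr_ae hae]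
      simp
    have hB : (∫ ρ in (w / s)..r, (if w ≤ ρ * s then ρ else 0)) = (r ^ 2 - (w / s) ^ 2) / 2 := by
      rw [intervalIntegral.integral_congr (g := fun x => x) ?_, integral_id]
      intro x hx
      rw [Set.uIcc_of_le hcr] at hx
      simp [(hiff x).2 hx.1]
    rw [hA, hB, zero_add]
  · rw [if_neg h, intervalIntegral.integral_congr (g := fun _ => 0) ?_]
    · simp
    · intro x hx
      rw [Set.uIcc_of_le hr.le] at hx
      have h1 : x * s ≤ r * s := mul_le_mul_of_nonneg_right hx.2 hs
      have h2 : ¬ (w ≤ x * s) := fun hh => h (hh.trans h1)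
      simp [h2]

private lemma sin_ge_on {a x : ℝ} (ha0 : 0 ≤ a) (ha : a ≤ Real.pi / 2)
    (hx : x ∈ Set.Icc a (Real.pi - a)) : Real.sin a ≤ Real.sin x := by
  have hmono := Real.strictMonoOn_sin.monotoneOn
  rcases le_total x (Real.pi / 2) with h | h
  · exact hmono ⟨by linarith, ha⟩ ⟨by linarith [hx.1], h⟩ hx.1
  · rw [← Real.sin_pi_sub x]
    exact hmono ⟨by linarith, ha⟩ ⟨by linarith [hx.2, ha0], by linarith⟩ (by linarith [hx.2])

private lemma sin_le_on {a x : ℝ} (ha : a ≤ Real.pi / 2) (hx0 : 0 ≤ x) (hxa : x ≤ a) :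
    Real.sin x ≤ Real.sin a := by
  have hmono := Real.strictMonoOn_sin.monotoneOn
  exact hmono ⟨by linarith, by linarith⟩ ⟨by linarith, ha⟩ hxa

private lemma abs_sin_le {a t : ℝ} (ha0 : 0 ≤ a) (ha : a ≤ Real.pi / 2) (ht : |t| ≤ a) :
    |Real.sin t| ≤ Real.sin a := by
  have key : ∀ u : ℝ, 0 ≤ u → u ≤ a → |Real.sin u| ≤ Real.sin a := by
    intro u hu0 hua
    rw [abs_of_nonneg (Real.sin_nonneg_of_nonneg_of_le_pi hu0
      (by linarith [Real.pi_pos]))]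
    exact sin_le_on ha hu0 hua
  rcases le_total 0 t with h | h
  · exact key t h (by rwa [abs_of_nonneg h] at ht)
  · rw [← abs_neg, ← Real.sin_neg]
    exact key (-t) (by linarith) (by rwa [abs_of_nonpos h] at ht)

private lemma hasDeriv_F (w r x : ℝ) (hx : Real.sin x ≠ 0) :
    HasDerivAt (fun y => r ^ 2 * y / 2 + w ^ 2 / 2 * (Real.cos y / Real.sin y))
      ((r ^ 2 - w ^ 2 / Real.sin x ^ 2) / 2) x := by
  have h1 : HasDerivAt (fun y => Real.cos y / Real.sin y)
      ((-Real.sin x * Real.sin x - Real.cos x * Real.cos x) / Real.sin x ^ 2) x :=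
    (Real.hasDerivAt_cos x).div (Real.hasDerivAt_sin x) hx
  have h2 : HasDerivAt (fun y => r ^ 2 * y / 2) (r ^ 2 / 2) x := by
    simpa using ((hasDerivAt_id x).const_mul (r ^ 2)).div_const 2
  have h3 := h2.add (h1.const_mul (w ^ 2 / 2))
  refine HasDerivAt.congr_deriv h3 ?_
  symm
  have hs : Real.sin x ^ 2 ≠ 0 := pow_ne_zero 2 hx
  have hpyth : Real.sin x ^ 2 + Real.cos x ^ 2 = 1 := Real.sin_sq_add_cos_sq x
  field_simp
  linear_combination w ^ 2 * hpyth

theorem volume_elliptic_island (w r : ℝ) (hw : 0 < w) (hwr : w ≤ r) :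
    (∫ ψ in (0:ℝ)..Real.pi, ∫ φ in (0:ℝ)..(2 * Real.pi), ∫ ρ in (0:ℝ)..r,
        (if w ≤ ρ * |Real.sin φ| then ρ else 0)) =
      2 * Real.pi * r ^ 2 *
        (Real.arccos (w / r) - (w / r) * Real.sqrt (1 - (w / r) ^ 2)) ∧
    2 * Real.pi * r ^ 2 *
        (Real.arccos (w / r) - (w / r) * Real.sqrt (1 - (w / r) ^ 2)) =
      mushroomDelta (w / r) * (Real.pi ^ 2 * r ^ 2) := by
  have hr : 0 < r := lt_of_lt_of_le hw hwr
  have hπ : 0 < Real.pi := Real.pi_pos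
  set ν := w / r with hν
  have hν0 : 0 < ν := div_pos hw hr
  have hν1 : ν ≤ 1 := (div_le_one hr).2 hwr
  have hwνr : w = ν * r := by rw [hν, div_mul_cancel₀ w hr.ne']
  set α := Real.arcsin ν with hα
  have hsinα : Real.sin α = ν := Real.sin_arcsin (by linarith) hν1
  have hcosα : Real.cos α = Real.sqrt (1 - ν ^ 2) := Real.cos_arcsin ν
  have hα0 : 0 < α := Real.arcsin_pos.2 hν0
  have hα2 : α ≤ Real.pi / 2 := Real.arcsin_le_pi_div_two ν
  set g : ℝ → ℝ := fun φ =>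
    if w ≤ r * |Real.sin φ| then (r ^ 2 - (w / |Real.sin φ|) ^ 2) / 2 else 0 with hgdef
  set h : ℝ → ℝ := fun x => (r ^ 2 - w ^ 2 / Real.sin x ^ 2) / 2 with hhdef
  set F : ℝ → ℝ := fun x => r ^ 2 * x / 2 + w ^ 2 / 2 * (Real.cos x / Real.sin x) with hFdef
  -- pointwise descriptions of g
  have hpos : ∀ x : ℝ, ν ≤ |Real.sin x| → g x = h x := by
    intro x hx
    have h1 : w ≤ r * |Real.sin x| := by
      rw [hwνr]
      calc ν * r = r * ν := mul_comm _ _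
      _ ≤ r * |Real.sin x| := by exact mul_le_mul_of_nonneg_left hx hr.le
    simp only [hgdef, hhdef, if_pos h1, div_pow, sq_abs]
  have hzero : ∀ x : ℝ, |Real.sin x| ≤ ν → g x = 0 := by
    intro x hx
    simp only [hgdef]
    by_cases h1 : w ≤ r * |Real.sin x|
    · have h2 : r * |Real.sin x| ≤ r * ν := mul_le_mul_of_nonneg_left hx hr.le
      have h3 : r * |Real.sin x| = w := le_antisymm (by rw [hwνr]; linarith) h1
      have h4 : |Real.sin x| = w / r := by
        rw [eq_div_iff hr.ne']; linarith [h3]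
      have h5 : w / |Real.sin x| = r := by
        rw [h4]; field_simp
      rw [if_pos h1, h5]
      ring
    · rw [if_neg h1]
  -- ordering facts
  have ho1 : α ≤ Real.pi - α := by linarith
  have ho2 : Real.pi - α ≤ Real.pi + α := by linarith
  have ho3 : Real.pi + α ≤ 2 * Real.pi - α := by linarith
  have ho4 : 2 * Real.pi - α ≤ 2 * Real.pi := by linarith
  -- zero regions
  have hz1 : Set.EqOn g (fun _ => 0) (Set.uIcc 0 α) := by
    intro x hx
    rw [Set.uIcc_of_le hα0.le] at hx
    have hle : |Real.sin x| ≤ ν := by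
      rw [← hsinα]
      exact abs_sin_le hα0.le hα2 (by rw [abs_of_nonneg hx.1]; exact hx.2)
    exact hzero x hle
  have hz2 : Set.EqOn g (fun _ => 0) (Set.uIcc (Real.pi - α) (Real.pi + α)) := by
    intro x hx
    rw [Set.uIcc_of_le ho2] at hx
    have habs : |Real.sin x| = |Real.sin (x - Real.pi)| := by
      rw [Real.sin_sub_pi, abs_neg]
    have hle : |Real.sin x| ≤ ν := by
      rw [habs, ← hsinα]
      exact abs_sin_le hα0.le hα2 (abs_le.2 ⟨by linarith [hx.1], by linarith [hx.2]⟩)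
    exact hzero x hle
  have hz3 : Set.EqOn g (fun _ => 0) (Set.uIcc (2 * Real.pi - α) (2 * Real.pi)) := by
    intro x hx
    rw [Set.uIcc_of_le ho4] at hx
    have habs : |Real.sin x| = |Real.sin (x - 2 * Real.pi)| := by
      rw [Real.sin_sub_two_pi]
    have hle : |Real.sin x| ≤ ν := by
      rw [habs, ← hsinα]
      exact abs_sin_le hα0.le hα2 (abs_le.2 ⟨by linarith [hx.1], by linarith [hx.2]⟩)
    exact hzero x hle
  -- positive regions
  have hp1 : ∀ x ∈ Set.uIcc α (Real.pi - α), ν ≤ |Real.sin x| := by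
    intro x hx
    rw [Set.uIcc_of_le ho1] at hx
    have h1 := sin_ge_on hα0.le hα2 hx
    rw [hsinα] at h1
    exact h1.trans (le_abs_self _)
  have hp2 : ∀ x ∈ Set.uIcc (Real.pi + α) (2 * Real.pi - α), ν ≤ |Real.sin x| := by
    intro x hx
    rw [Set.uIcc_of_le ho3] at hx
    have hx' : x - Real.pi ∈ Set.Icc α (Real.pi - α) :=
      ⟨by linarith [hx.1], by linarith [hx.2]⟩
    have h1 := sin_ge_on hα0.le hα2 hx'
    rw [hsinα] at h1
    have habs : |Real.sin (x - Real.pi)| = |Real.sin x| := by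
      rw [Real.sin_sub_pi, abs_neg]
    calc ν ≤ Real.sin (x - Real.pi) := h1
    _ ≤ |Real.sin (x - Real.pi)| := le_abs_self _
    _ = |Real.sin x| := habs
  have hne1 : ∀ x ∈ Set.uIcc α (Real.pi - α), Real.sin x ≠ 0 := by
    intro x hx h0
    have h1 := hp1 x hx
    rw [h0, abs_zero] at h1; linarith
  have hne2 : ∀ x ∈ Set.uIcc (Real.pi + α) (2 * Real.pi - α), Real.sin x ≠ 0 := by
    intro x hx h0
    have h1 := hp2 x hx
    rw [h0, abs_zero] at h1; linarith
  -- integrability of h on positive intervals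
  have hcont : ∀ a b : ℝ, (∀ x ∈ Set.uIcc a b, Real.sin x ≠ 0) →
      IntervalIntegrable h volume a b := by
    intro a b hab
    apply ContinuousOn.intervalIntegrable
    apply ContinuousOn.div_const
    exact continuousOn_const.sub (continuousOn_const.div
      ((Real.continuous_sin.continuousOn).pow 2)
      (fun x hx => pow_ne_zero 2 (hab x hx)))
  have i1 : IntervalIntegrable g volume 0 α := ii_congr hz1 intervalIntegrable_const
  have i2 : IntervalIntegrable g volume α (Real.pi - α) :=
    ii_congr (fun x hx => hpos x (hp1 x hx)) (hcont _ _ hne1)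
  have i3 : IntervalIntegrable g volume (Real.pi - α) (Real.pi + α) :=
    ii_congr hz2 intervalIntegrable_const
  have i4 : IntervalIntegrable g volume (Real.pi + α) (2 * Real.pi - α) :=
    ii_congr (fun x hx => hpos x (hp2 x hx)) (hcont _ _ hne2)
  have i5 : IntervalIntegrable g volume (2 * Real.pi - α) (2 * Real.pi) :=
    ii_congr hz3 intervalIntegrable_const
  -- values of pieces
  have e1 : (∫ x in (0:ℝ)..α, g x) = 0 := by
    rw [intervalIntegral.integral_congr hz1]; simp
  have e3 : (∫ x in (Real.pi - α)..(Real.pi + α), g x) = 0 := by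
    rw [intervalIntegral.integral_congr hz2]; simp
  have e5 : (∫ x in (2 * Real.pi - α)..(2 * Real.pi), g x) = 0 := by
    rw [intervalIntegral.integral_congr hz3]; simp
  have e2 : (∫ x in α..(Real.pi - α), g x) = F (Real.pi - α) - F α := by
    rw [intervalIntegral.integral_congr (fun x hx => hpos x (hp1 x hx))]
    exact intervalIntegral.integral_eq_sub_of_hasDerivAt
      (fun x hx => hasDeriv_F w r x (hne1 x hx)) (hcont _ _ hne1)
  have e4 : (∫ x in (Real.pi + α)..(2 * Real.pi - α), g x)
      = F (2 * Real.pi - α) - F (Real.pi + α) := by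
    rw [intervalIntegral.integral_congr (fun x hx => hpos x (hp2 x hx))]
    exact intervalIntegral.integral_eq_sub_of_hasDerivAt
      (fun x hx => hasDeriv_F w r x (hne2 x hx)) (hcont _ _ hne2)
  -- total φ-integral
  have hsum : (∫ x in (0:ℝ)..(2 * Real.pi), g x) =
      (F (Real.pi - α) - F α) + (F (2 * Real.pi - α) - F (Real.pi + α)) := by
    have s45 := i4.trans i5
    have s345 := i3.trans s45
    have s2345 := i2.trans s345
    rw [← intervalIntegral.integral_add_adjacent_intervals i1 s2345,
        ← intervalIntegral.integral_add_adjacent_intervals i2 s345,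
        ← intervalIntegral.integral_add_adjacent_intervals i3 s45,
        ← intervalIntegral.integral_add_adjacent_intervals i4 i5,
        e1, e2, e3, e4, e5]
    ring
  have hsνne : Real.sin α ≠ 0 := by rw [hsinα]; exact hν0.ne'
  have hFval : (F (Real.pi - α) - F α) + (F (2 * Real.pi - α) - F (Real.pi + α)) =
      r ^ 2 * (Real.pi - 2 * α) - 2 * w ^ 2 * (Real.cos α / Real.sin α) := by
    have s1 : Real.sin (Real.pi - α) = Real.sin α := Real.sin_pi_sub α
    have c1 : Real.cos (Real.pi - α) = -Real.cos α := Real.cos_pi_sub α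
    have s2 : Real.sin (Real.pi + α) = -Real.sin α := by
      rw [add_comm]; exact Real.sin_add_pi α
    have c2 : Real.cos (Real.pi + α) = -Real.cos α := by
      rw [add_comm]; exact Real.cos_add_pi α
    have s3 : Real.sin (2 * Real.pi - α) = -Real.sin α := Real.sin_two_pi_sub α
    have c3 : Real.cos (2 * Real.pi - α) = Real.cos α := Real.cos_two_pi_sub α
    simp only [hFdef, s1, c1, s2, c2, s3, c3]
    field_simp
    ring
  have hTot : (∫ x in (0:ℝ)..(2 * Real.pi), g x) =
      2 * r ^ 2 * Real.arccos ν - 2 * r ^ 2 * (ν * Real.sqrt (1 - ν ^ 2)) := by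
    rw [hsum, hFval, hsinα, hcosα, Real.arccos_eq_pi_div_two_sub_arcsin, ← hα, hwνr]
    field_simp
  have hinner : ∀ φ : ℝ, (∫ ρ in (0:ℝ)..r, (if w ≤ ρ * |Real.sin φ| then ρ else 0)) = g φ :=
    fun φ => inner_int w r _ hw hr (abs_nonneg _)
  constructor
  · simp only [hinner]
    rw [intervalIntegral.integral_const, hTot, smul_eq_mul]
    ring
  · simp only [mushroomDelta]
    field_simp
end

section
/- Fix $\varphi \in (0, \pi/2)$. Let $f, g : \mathbb{R} \to \mathbb{R}$ be functions such that, as $\varepsilon \to 0$, $f(\varepsilon) - \varphi - 2\varepsilon\sin\varphi = O(\varepsilon^2)$ and $g(\varepsilon) - 1 - 2\varepsilon\cos\varphi = O(\varepsilon^2)$. Then, as $\varepsilon \to 0$, $\arcsin\!\left(\frac{\sin f(\varepsilon)}{g(\varepsilon)}\right) - \varphi = O(\varepsilon^2)$. -/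
open Real Asymptotics Filter

private lemma sin_sub_id_isBigO : (fun t : ℝ => Real.sin t - t) =O[nhds 0] fun t : ℝ => t ^ 2 := by
  apply IsBigO.of_bound 1
  have h1 : ∀ᶠ t : ℝ in nhds 0, |t - 0| < 1 := eventually_abs_sub_lt 0 one_pos
  filter_upwards [h1] with t ht
  rw [sub_zero] at ht
  rcases lt_trichotomy t 0 with h | h | h
  · have h2 : Real.sin (-t) ≤ -t := Real.sin_le (by linarith)
    have h3 : (-t) - (-t) ^ 3 / 4 < Real.sin (-t) :=
      by have := Real.sin_gt_sub_cube (x := -t) (by linarith); have hp := pow_pos (show (0:ℝ) < -t by linarith) 3; linarith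
    rw [Real.sin_neg] at h2 h3
    have ht' : -t ≤ 1 := by rw [abs_of_neg h] at ht; linarith
    rw [abs_of_neg h] at ht
    have : |Real.sin t - t| ≤ t ^ 2 := by
      rw [abs_le]; constructor <;> nlinarith
    simpa using this
  · simp [h]
  · have h2 : Real.sin t ≤ t := Real.sin_le h.le
    have h3 : t - t ^ 3 / 4 < Real.sin t :=
      by have := Real.sin_gt_sub_cube h; have hp := pow_pos h 3; linarith
    rw [abs_of_pos h] at ht
    have : |Real.sin t - t| ≤ t ^ 2 := by
      rw [abs_le]; constructor <;> nlinarith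
    simpa using this

private lemma cos_sub_one_isBigO : (fun t : ℝ => Real.cos t - 1) =O[nhds 0] fun t : ℝ => t ^ 2 := by
  apply IsBigO.of_bound 1
  filter_upwards with t
  have h1 : Real.sin (t / 2) ^ 2 + Real.cos (t / 2) ^ 2 = 1 := Real.sin_sq_add_cos_sq _
  have h2 : Real.cos (2 * (t / 2)) = 2 * Real.cos (t / 2) ^ 2 - 1 := Real.cos_two_mul _
  have h3 : |Real.sin (t / 2)| ≤ |t / 2| := Real.abs_sin_le_abs
  have h4 : Real.sin (t / 2) ^ 2 ≤ (t / 2) ^ 2 := by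
    rw [← sq_abs (Real.sin _), ← sq_abs (t / 2)]
    exact pow_le_pow_left₀ (abs_nonneg _) h3 2
  have h5 : Real.cos t = 1 - 2 * Real.sin (t / 2) ^ 2 := by
    have ht : Real.cos t = 2 * Real.cos (t / 2) ^ 2 - 1 := by
      nth_rewrite 1 [show t = 2 * (t / 2) by ring]
      exact Real.cos_two_mul _
    linarith
  have h6 : |Real.cos t - 1| = 2 * Real.sin (t / 2) ^ 2 := by
    rw [h5, abs_of_nonpos (by nlinarith [sq_nonneg (Real.sin (t / 2))])]
    ring
  simp only [Real.norm_eq_abs]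
  rw [h6, abs_of_nonneg (sq_nonneg t)]
  nlinarith

theorem impact_angle_adiabatic_invariant (φ : ℝ) (hφ : φ ∈ Set.Ioo 0 (Real.pi / 2))
    (f g : ℝ → ℝ)
    (hf : (fun ε : ℝ => f ε - φ - 2 * ε * Real.sin φ) =O[nhds 0] fun ε : ℝ => ε ^ 2)
    (hg : (fun ε : ℝ => g ε - 1 - 2 * ε * Real.cos φ) =O[nhds 0] fun ε : ℝ => ε ^ 2) :
    (fun ε : ℝ => Real.arcsin (Real.sin (f ε) / g ε) - φ)
      =O[nhds 0] fun ε : ℝ => ε ^ 2 := by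
  obtain ⟨hφ1, hφ2⟩ := hφ
  have hπ := Real.pi_pos
  have hcos : 0 < Real.cos φ := Real.cos_pos_of_mem_Ioo ⟨by linarith, hφ2⟩
  have hsin : 0 < Real.sin φ := Real.sin_pos_of_pos_of_lt_pi hφ1 (by linarith)
  have hpyth := Real.sin_sq_add_cos_sq φ
  have hsin1 : Real.sin φ < 1 := by nlinarith
  -- ε² = O(ε)
  have hsq : (fun ε : ℝ => ε ^ 2) =O[nhds 0] fun ε : ℝ => ε := by
    apply IsBigO.of_bound 1
    filter_upwards [eventually_abs_sub_lt (0:ℝ) one_pos] with ε hε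
    rw [sub_zero] at hε
    simp only [Real.norm_eq_abs]
    rw [pow_two, abs_mul]
    nlinarith [abs_nonneg ε]
  -- f ε - φ = O(ε)
  have hfφ : (fun ε : ℝ => f ε - φ) =O[nhds 0] fun ε : ℝ => ε := by
    have h1 := (hf.trans hsq).add ((isBigO_refl (fun ε : ℝ => ε) (nhds 0)).const_mul_left (2 * Real.sin φ))
    refine h1.congr_left fun ε => by ring
  have hgO : (fun ε : ℝ => g ε - 1) =O[nhds 0] fun ε : ℝ => ε := by
    have h1 := (hg.trans hsq).add ((isBigO_refl (fun ε : ℝ => ε) (nhds 0)).const_mul_left (2 * Real.cos φ))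
    refine h1.congr_left fun ε => by ring
  have htf : Filter.Tendsto (fun ε : ℝ => f ε - φ) (nhds 0) (nhds 0) :=
    hfφ.trans_tendsto (by exact Filter.tendsto_id (α := ℝ) (x := nhds 0))
  -- Taylor of sin around φ, second order
  have hsin2 : (fun ε : ℝ => Real.sin (f ε) - Real.sin φ - Real.cos φ * (f ε - φ))
      =O[nhds 0] fun ε : ℝ => ε ^ 2 := by
    have hcosc : (fun ε : ℝ => Real.cos (f ε - φ) - 1) =O[nhds 0] fun ε : ℝ => (f ε - φ) ^ 2 :=
      cos_sub_one_isBigO.comp_tendsto htf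
    have hsinc : (fun ε : ℝ => Real.sin (f ε - φ) - (f ε - φ)) =O[nhds 0]
        fun ε : ℝ => (f ε - φ) ^ 2 := sin_sub_id_isBigO.comp_tendsto htf
    have hsq2 : (fun ε : ℝ => (f ε - φ) ^ 2) =O[nhds 0] fun ε : ℝ => ε ^ 2 := by
      simpa using hfφ.pow 2
    have h1 := ((hcosc.trans hsq2).const_mul_left (Real.sin φ)).add
      ((hsinc.trans hsq2).const_mul_left (Real.cos φ))
    refine h1.congr_left fun ε => ?_
    have : Real.sin (f ε) = Real.sin (φ + (f ε - φ)) := by ring_nf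
    rw [this, Real.sin_add]; ring
  -- numerator cancellation
  have hnum : (fun ε : ℝ => Real.sin (f ε) - Real.sin φ * g ε) =O[nhds 0] fun ε : ℝ => ε ^ 2 := by
    have h1 := (hsin2.add (hf.const_mul_left (Real.cos φ))).sub (hg.const_mul_left (Real.sin φ))
    refine h1.congr_left fun ε => by ring
  -- g tends to 1
  have hgt : Filter.Tendsto g (nhds 0) (nhds 1) := by
    have h1 : Filter.Tendsto (fun ε : ℝ => g ε - 1) (nhds 0) (nhds 0) :=
      hgO.trans_tendsto (by exact Filter.tendsto_id (α := ℝ) (x := nhds 0))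
    have := h1.add_const 1
    simpa using this
  have hge : ∀ᶠ ε : ℝ in nhds 0, 1 / 2 ≤ g ε :=
    hgt.eventually (eventually_ge_nhds (by norm_num))
  -- quotient
  have hx : (fun ε : ℝ => Real.sin (f ε) / g ε - Real.sin φ) =O[nhds 0] fun ε : ℝ => ε ^ 2 := by
    refine IsBigO.trans ?_ hnum
    apply IsBigO.of_bound 2
    filter_upwards [hge] with ε hε
    have hg0 : g ε ≠ 0 := by linarith
    have : Real.sin (f ε) / g ε - Real.sin φ = (Real.sin (f ε) - Real.sin φ * g ε) / g ε := by
      field_simp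
    simp only [Real.norm_eq_abs]
    rw [this, abs_div]
    rw [div_le_iff₀ (by rw [abs_of_pos (by linarith)]; linarith)]
    have : |g ε| = g ε := abs_of_pos (by linarith)
    rw [this]
    nlinarith [abs_nonneg (Real.sin (f ε) - Real.sin φ * g ε)]
  have htx : Filter.Tendsto (fun ε : ℝ => Real.sin (f ε) / g ε) (nhds 0) (nhds (Real.sin φ)) := by
    have h1 : Filter.Tendsto (fun ε : ℝ => Real.sin (f ε) / g ε - Real.sin φ) (nhds 0) (nhds 0) :=
      hx.trans_tendsto (by simpa using (Filter.tendsto_id (α := ℝ) (x := nhds 0)).pow 2)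
    have := h1.add_const (Real.sin φ)
    simpa using this
  have hd : DifferentiableAt ℝ Real.arcsin (Real.sin φ) :=
    Real.differentiableAt_arcsin.2 ⟨by linarith, by linarith⟩
  have hA := hd.isBigO_sub
  have hB := (hA.comp_tendsto htx).trans hx
  refine hB.congr_left fun ε => ?_
  simp only [Function.comp]
  rw [Real.arcsin_sin (by linarith) hφ2.le]
end
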